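/- Let I be an ideal on the positive integers N containing all finite sets, and let ν : P(N) → R be a normalized capacity that is I-invariant. Then there exists a normalized capacity ρ on the Borel σ-algebra of Ult(I) such that for every bounded sequence x : N → R, the Choquet integral of x with respect to ν equals the Choquet integral over Ult(I), with respect to ρ, of the function F ↦ lim_F x (the limit of x along the ultrafilter F, which equals the Choquet integral of x with respect to μ_F). -/

import Mathlib

open Filter Set MeasureTheory
open scoped symmDiff

/-- An ideal on `ℕ` (containing all finite sets). -/
def IsIdealOn (I : Set (Set ℕ)) : Prop :=
  (∀ A B : Set ℕ, A ⊆ B → B ∈ I → A ∈ I) ∧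
  (∀ A B : Set ℕ, A ∈ I → B ∈ I → A ∪ B ∈ I) ∧
  (Set.univ : Set ℕ) ∉ I ∧
  (∀ A : Set ℕ, A.Finite → A ∈ I)

/-- `Ult I`: the ultrafilters on `ℕ` containing the dual filter of `I`, as a
subspace of the Stone–Čech compactification `βℕ = Ultrafilter ℕ`. -/
abbrev Ult (I : Set (Set ℕ)) : Type := {F : Ultrafilter ℕ // ∀ A ∈ I, Aᶜ ∈ F}

/-- The Choquet integral of `f : S → ℝ` with respect to a monotone set function
`ν : Set S → ℝ`:
`∫_0^∞ ν {f ≥ t} dt + ∫_{-∞}^0 (ν {f ≥ t} - ν S) dt`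
(for bounded `f` and a normalized capacity `ν` the integrands are monotone,
bounded and eventually zero, so these Lebesgue integrals coincide with the
improper Riemann integrals of the paper). -/
noncomputable def choquetInt {S : Type*} (ν : Set S → ℝ) (f : S → ℝ) : ℝ :=
  (∫ t in Set.Ioi (0 : ℝ), ν {s | t ≤ f s}) +
    ∫ t in Set.Iio (0 : ℝ), (ν {s | t ≤ f s} - ν Set.univ)

/-- The `{0,1}`-valued finitely additive probability measure `μ_F` associated
with an ultrafilter `F`: `μ_F A = 1` iff `A ∈ F`. -/
noncomputable def muUlt (F : Ultrafilter ℕ) : Set ℕ → ℝ :=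
  fun A => Set.indicator {B : Set ℕ | B ∈ F} (fun _ => (1 : ℝ)) A

/-! ### Auxiliary machinery -/

/-- The set of levels `t` for which `{n | t ≤ x n}` belongs to the ultrafilter `F`.
Its supremum is the limit of `x` along `F`. -/
def Tset (F : Ultrafilter ℕ) (x : ℕ → ℝ) : Set ℝ := {t : ℝ | {n | t ≤ x n} ∈ F}

lemma Tset_down (F : Ultrafilter ℕ) (x : ℕ → ℝ) {s t : ℝ} (hst : s ≤ t)
    (ht : t ∈ Tset F x) : s ∈ Tset F x :=
  Filter.mem_of_superset ht (fun n hn => le_trans hst hn)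

lemma Tset_mem_neg (F : Ultrafilter ℕ) (x : ℕ → ℝ) {C : ℝ} (hx : ∀ n, |x n| ≤ C) :
    -C ∈ Tset F x := by
  have : {n : ℕ | -C ≤ x n} = Set.univ := by
    ext n; simp [(abs_le.1 (hx n)).1]
  have h2 : (Set.univ : Set ℕ) ∈ F := Ultrafilter.mem_coe.1 Filter.univ_mem
  simpa [Tset, this] using h2

lemma Tset_le (F : Ultrafilter ℕ) (x : ℕ → ℝ) {C : ℝ} (hx : ∀ n, |x n| ≤ C)
    {t : ℝ} (ht : t ∈ Tset F x) : t ≤ C := by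
  by_contra h
  push_neg at h
  have : {n : ℕ | t ≤ x n} = (∅ : Set ℕ) := by
    ext n
    simp only [Set.mem_setOf_eq, Set.mem_empty_iff_false, iff_false, not_le]
    exact lt_of_le_of_lt ((abs_le.1 (hx n)).2) h
  rw [Tset, Set.mem_setOf_eq, this] at ht
  exact Ultrafilter.empty_notMem ht

lemma Tset_nonempty (F : Ultrafilter ℕ) (x : ℕ → ℝ) {C : ℝ} (hx : ∀ n, |x n| ≤ C) :
    (Tset F x).Nonempty := ⟨-C, Tset_mem_neg F x hx⟩

lemma Tset_bddAbove (F : Ultrafilter ℕ) (x : ℕ → ℝ) {C : ℝ} (hx : ∀ n, |x n| ≤ C) :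
    BddAbove (Tset F x) := ⟨C, fun _ ht => Tset_le F x hx ht⟩

lemma Tset_mem_of_lt (F : Ultrafilter ℕ) (x : ℕ → ℝ) {C : ℝ} (hx : ∀ n, |x n| ≤ C)
    {t : ℝ} (ht : t < sSup (Tset F x)) : t ∈ Tset F x := by
  obtain ⟨t', ht', h⟩ := exists_lt_of_lt_csSup (Tset_nonempty F x hx) ht
  exact Tset_down F x h.le ht'

/-- The Choquet integral of a bounded sequence w.r.t. `μ_F` is the limit of the
sequence along `F`, i.e. `sSup (Tset F x)`. -/
lemma choquet_mu (F : Ultrafilter ℕ) (x : ℕ → ℝ) {C : ℝ} (hx : ∀ n, |x n| ≤ C) :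
    choquetInt (muUlt F) x = sSup (Tset F x) := by
  classical
  set L := sSup (Tset F x) with hL
  have hne := Tset_nonempty F x hx
  have hbdd := Tset_bddAbove F x hx
  have hle : ∀ t ∈ Tset F x, t ≤ L := fun t ht => le_csSup hbdd ht
  have haeL : ∀ᵐ t : ℝ, t ≠ L := by
    have h1 : {a : ℝ | ¬ a ≠ L} = {L} := by ext a; simp
    rw [ae_iff, h1]
    exact measure_singleton L
  have hμ : ∀ S : Set ℕ, muUlt F S = if S ∈ F then (1 : ℝ) else 0 := by
    intro S; simp [muUlt, Set.indicator_apply]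
  have I1 : (∫ t in Set.Ioi (0 : ℝ), muUlt F {s | t ≤ x s}) = max L 0 := by
    have h1 : (fun t => muUlt F {s | t ≤ x s})
        =ᵐ[volume.restrict (Set.Ioi (0:ℝ))]
        (Set.Ioc (0:ℝ) L).indicator (fun _ => (1:ℝ)) := by
      refine (ae_restrict_iff' measurableSet_Ioi).2 ?_
      filter_upwards [haeL] with t htL htpos
      by_cases htT : t ∈ Tset F x
      · have hmem : t ∈ Set.Ioc (0:ℝ) L := ⟨htpos, hle t htT⟩
        have hTF : {s : ℕ | t ≤ x s} ∈ F := htT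
        simp [hμ, hTF, Set.indicator_of_mem hmem]
      · have hmem : t ∉ Set.Ioc (0:ℝ) L := by
          intro h
          exact htT (Tset_mem_of_lt F x hx (lt_of_le_of_ne h.2 htL))
        have hTF : {s : ℕ | t ≤ x s} ∉ F := htT
        simp [hμ, hTF, Set.indicator_of_notMem hmem]
    rw [integral_congr_ae h1, integral_indicator measurableSet_Ioc,
      Measure.restrict_restrict measurableSet_Ioc,
      Set.inter_eq_left.2 Set.Ioc_subset_Ioi_self]
    simp [Real.volume_Ioc, ENNReal.toReal_ofReal']
  have I2 : (∫ t in Set.Iio (0 : ℝ),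
      (muUlt F {s | t ≤ x s} - muUlt F Set.univ)) = min L 0 := by
    have huF : (Set.univ : Set ℕ) ∈ F := Ultrafilter.mem_coe.1 Filter.univ_mem
    have huniv1 : muUlt F Set.univ = 1 := by simp [hμ, huF]
    have h2 : (fun t => muUlt F {s | t ≤ x s} - muUlt F Set.univ)
        =ᵐ[volume.restrict (Set.Iio (0:ℝ))]
        (Set.Ioo L (0:ℝ)).indicator (fun _ => (-1:ℝ)) := by
      refine (ae_restrict_iff' measurableSet_Iio).2 ?_
      filter_upwards [haeL] with t htL htneg
      by_cases htT : t ∈ Tset F x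
      · have hmem : t ∉ Set.Ioo L (0:ℝ) := fun h => absurd (hle t htT) (not_le.2 h.1)
        have hTF : {s : ℕ | t ≤ x s} ∈ F := htT
        simp [hμ, hTF, huF, Set.indicator_of_notMem hmem]
      · have hLt : L < t := by
          rcases lt_trichotomy t L with h | h | h
          · exact absurd (Tset_mem_of_lt F x hx h) htT
          · exact absurd h htL
          · exact h
        have hmem : t ∈ Set.Ioo L (0:ℝ) := ⟨hLt, htneg⟩
        have hTF : {s : ℕ | t ≤ x s} ∉ F := htT
        simp [hμ, hTF, huF, Set.indicator_of_mem hmem]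
    rw [integral_congr_ae h2, integral_indicator measurableSet_Ioo,
      Measure.restrict_restrict measurableSet_Ioo,
      Set.inter_eq_left.2 Set.Ioo_subset_Iio_self]
    rcases le_total L 0 with h | h
    · rw [setIntegral_const, Real.volume_real_Ioo_of_le h, smul_eq_mul,
        min_eq_left h]
      ring
    · rw [Set.Ioo_eq_empty (not_lt.2 h), min_eq_right h]
      simp
  rw [choquetInt, I1, I2]
  rcases le_total L 0 with h | h
  · rw [max_eq_right h, min_eq_left h, zero_add]
  · rw [max_eq_left h, min_eq_right h, add_zero]

/-- Any set not in the ideal is contained in some ultrafilter extending the dual filter. -/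
lemma exists_ult_mem {I : Set (Set ℕ)} (hI : IsIdealOn I) {A : Set ℕ} (hA : A ∉ I) :
    ∃ F : Ult I, A ∈ (F : Ultrafilter ℕ) := by
  obtain ⟨hdown, hunion, -, hfin⟩ := hI
  let G : Filter ℕ :=
    { sets := {C | Cᶜ ∈ I}
      univ_sets := by simpa using hfin ∅ Set.finite_empty
      sets_of_superset := fun {C D} hC hCD =>
        hdown _ _ (Set.compl_subset_compl.2 hCD) hC
      inter_sets := fun {C D} hC hD => by
        simpa [Set.compl_inter] using hunion _ _ hC hD }
  have hGmem : ∀ B ∈ I, Bᶜ ∈ G := fun B hB => by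
    show Bᶜᶜ ∈ I
    rwa [compl_compl]
  have hne : (G ⊓ 𝓟 A).NeBot := by
    rw [Filter.inf_principal_neBot_iff]
    intro U hU
    by_contra h
    rw [Set.not_nonempty_iff_eq_empty] at h
    exact hA (hdown A Uᶜ (fun n hn => fun hUn =>
      (Set.eq_empty_iff_forall_notMem.1 h n) ⟨hUn, hn⟩) hU)
  obtain ⟨F, hF⟩ := Ultrafilter.exists_le (G ⊓ 𝓟 A)
  refine ⟨⟨F, fun B hB => Ultrafilter.mem_coe.1 ((hF.trans inf_le_left) (hGmem B hB))⟩, ?_⟩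
  exact Ultrafilter.mem_coe.1 (le_principal_iff.1 (hF.trans inf_le_right))

/-- The basic clopen set `Â ⊆ Ult I` associated with `A ⊆ ℕ`. -/
def hatU (I : Set (Set ℕ)) (A : Set ℕ) : Set (Ult I) :=
  {F : Ult I | A ∈ (F : Ultrafilter ℕ)}

lemma hat_subset_imp {I : Set (Set ℕ)} (hI : IsIdealOn I)
    (ν : Set ℕ → ℝ) (hmono : ∀ A B : Set ℕ, A ⊆ B → ν A ≤ ν B)
    (hinv : ∀ A B : Set ℕ, A ∆ B ∈ I → ν A = ν B)
    {A B : Set ℕ} (h : hatU I A ⊆ hatU I B) : ν A ≤ ν B := by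
  have hAB : A \ B ∈ I := by
    by_contra hc
    obtain ⟨F, hF⟩ := exists_ult_mem hI hc
    have hA : A ∈ (F : Ultrafilter ℕ) :=
      Filter.mem_of_superset hF Set.diff_subset
    have hB : B ∈ (F : Ultrafilter ℕ) := h hA
    have hmem : (A \ B) ∩ B ∈ (F : Ultrafilter ℕ) := Filter.inter_mem hF hB
    rw [Set.diff_inter_self] at hmem
    exact Ultrafilter.empty_notMem hmem
  have hsd : A ∆ (A ∩ B) = A \ B := by
    ext n
    simp only [Set.mem_symmDiff, Set.mem_inter_iff, Set.mem_diff]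
    tauto
  calc ν A = ν (A ∩ B) := hinv _ _ (by rwa [hsd])
    _ ≤ ν B := hmono _ _ Set.inter_subset_right

theorem statement2 (I : Set (Set ℕ)) (hI : IsIdealOn I)
    (ν : Set ℕ → ℝ)
    (hmono : ∀ A B : Set ℕ, A ⊆ B → ν A ≤ ν B)
    (hempty : ν ∅ = 0) (huniv : ν Set.univ = 1)
    (hinv : ∀ A B : Set ℕ, A ∆ B ∈ I → ν A = ν B) :
    ∃ ρ : Set (Ult I) → ℝ,
      ρ ∅ = 0 ∧ ρ Set.univ = 1 ∧
      (∀ s t : Set (Ult I), @MeasurableSet _ (borel (Ult I)) s →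
        @MeasurableSet _ (borel (Ult I)) t → s ⊆ t → ρ s ≤ ρ t) ∧
      ∀ x : ℕ → ℝ, (∃ C : ℝ, ∀ n, |x n| ≤ C) →
        choquetInt ν x =
          choquetInt ρ (fun F : Ult I => choquetInt (muUlt (F : Ultrafilter ℕ)) x) := by
  classical
  set ρ : Set (Ult I) → ℝ := fun S => sSup (ν '' {A | hatU I A ⊆ S}) with hρ
  have hnonneg : ∀ A : Set ℕ, 0 ≤ ν A := fun A =>
    hempty ▸ hmono ∅ A (Set.empty_subset A)
  have hle1 : ∀ A : Set ℕ, ν A ≤ 1 := fun A =>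
    huniv ▸ hmono A Set.univ (Set.subset_univ A)
  have hbdd : ∀ S : Set (Ult I), BddAbove (ν '' {A | hatU I A ⊆ S}) := fun S =>
    ⟨1, by rintro _ ⟨A, -, rfl⟩; exact hle1 A⟩
  have hhatempty : hatU I (∅ : Set ℕ) = ∅ := by
    ext F
    simp only [hatU, Set.mem_setOf_eq, Set.mem_empty_iff_false, iff_false]
    exact Ultrafilter.empty_notMem
  have hemem : ∀ S : Set (Ult I), (∅ : Set ℕ) ∈ {A | hatU I A ⊆ S} := fun S => by
    rw [Set.mem_setOf_eq, hhatempty]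
    exact Set.empty_subset S
  have hne : ∀ S : Set (Ult I), (ν '' {A | hatU I A ⊆ S}).Nonempty := fun S =>
    ⟨ν ∅, ⟨∅, hemem S, rfl⟩⟩
  have hρempty : ρ ∅ = 0 := by
    refine le_antisymm ?_ (le_csSup (hbdd ∅) ⟨∅, hemem ∅, hempty⟩)
    apply csSup_le (hne ∅)
    rintro _ ⟨A, hA, rfl⟩
    have hAI : A ∈ I := by
      by_contra hc
      obtain ⟨F, hF⟩ := exists_ult_mem hI hc
      exact hA hF
    have hsd : A ∆ (∅ : Set ℕ) = A := by simp
    have hA0 : ν A = ν ∅ := hinv A ∅ (by rwa [hsd])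
    rw [hA0, hempty]
  have hρuniv : ρ Set.univ = 1 := by
    refine le_antisymm (csSup_le (hne _) ?_) ?_
    · rintro _ ⟨A, -, rfl⟩; exact hle1 A
    · exact le_csSup (hbdd _) ⟨Set.univ, Set.subset_univ _, huniv⟩
  have hρmono : ∀ s t : Set (Ult I), s ⊆ t → ρ s ≤ ρ t := fun s t hst =>
    csSup_le_csSup (hbdd t) (hne s)
      (Set.image_mono fun A hA => Set.Subset.trans hA hst)
  refine ⟨ρ, hρempty, hρuniv, fun s t _ _ hst => hρmono s t hst, ?_⟩
  rintro x ⟨C, hC⟩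
  have hgx : (fun F : Ult I => choquetInt (muUlt (F : Ultrafilter ℕ)) x)
      = fun F : Ult I => sSup (Tset (F : Ultrafilter ℕ) x) :=
    funext fun F => choquet_mu _ x hC
  rw [hgx]
  set g : Ult I → ℝ := fun F => sSup (Tset (F : Ultrafilter ℕ) x) with hg
  set h : ℝ → ℝ := fun t => ν {n | t ≤ x n} with hh
  have hanti : Antitone h := fun a b hab => hmono _ _ (fun n hn => hab.trans hn)
  set r : ℝ → ℝ := fun t => ρ {F : Ult I | t ≤ g F} with hr
  have h_le_r : ∀ t, h t ≤ r t := by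
    intro t
    apply le_csSup (hbdd _)
    refine ⟨{n | t ≤ x n}, ?_, rfl⟩
    intro F hF
    show t ≤ g F
    exact le_csSup (Tset_bddAbove _ x hC) hF
  have r_le_h : ∀ s t : ℝ, s < t → r t ≤ h s := by
    intro s t hst
    apply csSup_le (hne _)
    rintro _ ⟨A, hA, rfl⟩
    apply hat_subset_imp hI ν hmono hinv
    intro F hF
    have hgF : t ≤ g F := hA hF
    obtain ⟨t', ht', hst'⟩ :=
      exists_lt_of_lt_csSup (Tset_nonempty _ x hC) (lt_of_lt_of_le hst hgF)
    exact Tset_down _ x hst'.le ht'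
  have hcont : ∀ t, ContinuousAt h t → r t = h t := by
    intro t hct
    refine le_antisymm ?_ (h_le_r t)
    by_contra hcon
    push_neg at hcon
    obtain ⟨δ, hδ, hδ2⟩ := Metric.continuousAt_iff.1 hct (r t - h t) (by linarith)
    have hdist : dist (t - δ / 2) t < δ := by
      rw [Real.dist_eq]
      have : t - δ / 2 - t = -(δ / 2) := by ring
      rw [this, abs_neg, abs_of_nonneg (by linarith)]
      linarith
    have hval := hδ2 hdist
    rw [Real.dist_eq] at hval
    have h1 : h (t - δ / 2) - h t < r t - h t := lt_of_le_of_lt (le_abs_self _) hval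
    have h2 : r t ≤ h (t - δ / 2) := r_le_h _ t (by linarith)
    linarith
  have haeq : ∀ᵐ t : ℝ, r t = h t := by
    have hm : volume {t : ℝ | ¬ContinuousAt h t} = 0 :=
      (hanti.countable_not_continuousAt).measure_zero _
    rw [ae_iff]
    apply measure_mono_null _ hm
    intro t ht
    simp only [Set.mem_setOf_eq] at ht ⊢
    exact fun hc => ht (hcont t hc)
  have e1 : (∫ t in Set.Ioi (0:ℝ), ν {s | t ≤ x s})
      = ∫ t in Set.Ioi (0:ℝ), ρ {F : Ult I | t ≤ g F} :=
    (integral_congr_ae (ae_restrict_of_ae (haeq.mono fun t ht => ht))).symm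
  have e2 : (∫ t in Set.Iio (0:ℝ), (ν {s | t ≤ x s} - ν Set.univ))
      = ∫ t in Set.Iio (0:ℝ), (ρ {F : Ult I | t ≤ g F} - ρ Set.univ) :=
    (integral_congr_ae (ae_restrict_of_ae (haeq.mono fun t ht => by
      show r t - ρ Set.univ = h t - ν Set.univ
      rw [ht, hρuniv, huniv]))).symm
  simp only [choquetInt]
  rw [e1, e2]
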